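/- Let H be Hermitian on a finite-dimensional space ℋ, let ℰ be a subspace spanned by eigenvectors of H, and let B : ℂ^M → ℋ be a linear map with range exactly ℰ. Then the set of proper generalized eigenvalues of the pair (B*HB, B*B) equals the set of eigenvalues of H restricted to ℰ. -/

import Mathlib

/-- If `ℰ` is a subspace spanned by eigenvectors of a Hermitian `H` and `B : ℂ^M → ℋ`
has range exactly `ℰ`, then the proper generalized eigenvalues of `(B*HB, B*B)` are
exactly the eigenvalues of `H` restricted to `ℰ`. -/
theorem stmt_17 {ℋ : Type*} [NormedAddCommGroup ℋ] [InnerProductSpace ℂ ℋ]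
    [FiniteDimensional ℂ ℋ] (M : ℕ)
    (H : ℋ →ₗ[ℂ] ℋ) (hH : ∀ u v : ℋ, inner ℂ (H u) v = (inner ℂ u (H v) : ℂ))
    (ℰ : Submodule ℂ ℋ)
    (hspan : ∃ S : Set ℋ, (∀ v ∈ S, ∃ μ : ℂ, H v = μ • v) ∧ ℰ = Submodule.span ℂ S)
    (B : (Fin M → ℂ) →ₗ[ℂ] ℋ) (hrange : LinearMap.range B = ℰ) :
    {μ : ℂ | ∃ x : Fin M → ℂ, B x ≠ 0 ∧
        ∀ y : Fin M → ℂ, inner ℂ (B y) (H (B x)) = μ * (inner ℂ (B y) (B x) : ℂ)} =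
      {μ : ℂ | ∃ v ∈ ℰ, v ≠ 0 ∧ H v = μ • v} := by
  obtain ⟨S, hS, hEspan⟩ := hspan
  have hinv : ∀ v ∈ ℰ, H v ∈ ℰ := by
    rw [hEspan]
    intro v hv
    induction hv using Submodule.span_induction with
    | mem x hx =>
        obtain ⟨ν, hν⟩ := hS x hx
        rw [hν]
        exact Submodule.smul_mem _ _ (Submodule.subset_span hx)
    | zero => simp
    | add x y _ _ hx hy => rw [map_add]; exact Submodule.add_mem _ hx hy
    | smul c x _ hx => rw [map_smul]; exact Submodule.smul_mem _ _ hx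
  ext μ
  simp only [Set.mem_setOf_eq]
  constructor
  · rintro ⟨x, hx0, hx⟩
    have hBxE : B x ∈ ℰ := hrange ▸ LinearMap.mem_range_self B x
    refine ⟨B x, hBxE, hx0, ?_⟩
    set w := H (B x) - μ • B x with hw
    have hwE : w ∈ ℰ :=
      Submodule.sub_mem _ (hinv _ hBxE) (Submodule.smul_mem _ _ hBxE)
    obtain ⟨y, hy⟩ : ∃ y, B y = w := by
      rw [← LinearMap.mem_range, hrange]; exact hwE
    have h0 : (inner ℂ (B y) w : ℂ) = 0 := by
      rw [hw, inner_sub_right, inner_smul_right, hx y]; ring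
    rw [hy] at h0
    have hw0 : w = 0 := inner_self_eq_zero.mp h0
    rw [hw, sub_eq_zero] at hw0
    exact hw0
  · rintro ⟨v, hvE, hv0, hv⟩
    obtain ⟨x, hx⟩ : ∃ x, B x = v := by
      rw [← LinearMap.mem_range, hrange]; exact hvE
    exact ⟨x, by rw [hx]; exact hv0,
      fun y => by rw [hx, hv, inner_smul_right]⟩
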